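/- Let λx.F be a closed term and suppose x ∉ βΩ(F), i.e. there is a term t' with F ▷_{βΩ}* t' in which x does not occur. Then F[x:=u] ≃ F[x:=v] for all closed terms u, v; hence the range of λx.F in H is a singleton. -/

import Mathlib

/-! ## A de Bruijn presentation of the untyped λ-calculus -/

/-- Untyped λ-terms in de Bruijn representation. -/
inductive Lam : Type where
  | var : ℕ → Lam
  | app : Lam → Lam → Lam
  | abs : Lam → Lam
  deriving DecidableEq

namespace Lam

/-- Lifting of de Bruijn indices (cutoff `d`). -/
def lift (d : ℕ) : Lam → Lam
  | var n => if n < d then var n else var (n + 1)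
  | app a b => app (lift d a) (lift d b)
  | abs a => abs (lift (d + 1) a)

/-- Capture-avoiding substitution of `u` for the free variable `k`. -/
def subst : Lam → ℕ → Lam → Lam
  | var n, k, u => if n = k then u else if k < n then var (n - 1) else var n
  | app a b, k, u => app (subst a k u) (subst b k u)
  | abs a, k, u => abs (subst a (k + 1) (lift 0 u))

/-- One-step β-reduction `▷`. -/
inductive Step : Lam → Lam → Prop
  | beta (a b : Lam) : Step (app (abs a) b) (subst a 0 b)
  | appL {a a' : Lam} (b : Lam) : Step a a' → Step (app a b) (app a' b)
  | appR (a : Lam) {b b' : Lam} : Step b b' → Step (app a b) (app a b')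
  | abs {a a' : Lam} : Step a a' → Step (Lam.abs a) (Lam.abs a')

/-- β-reduction `▷*` : reflexive and transitive closure of `▷`. -/
def Steps : Lam → Lam → Prop := Relation.ReflTransGen Step

/-- β-normal term. -/
def Normal (t : Lam) : Prop := ∀ t', ¬ Step t t'

/-- `Free x t` : the variable `x` (de Bruijn index, seen from the root) occurs free in `t`. -/
def Free : ℕ → Lam → Prop
  | x, var n => x = n
  | x, app a b => Free x a ∨ Free x b
  | x, abs a => Free (x + 1) a

/-- Closed term. -/
def Closed (t : Lam) : Prop := ∀ x, ¬ Free x t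

/-- A variable applied to a (possibly empty) list of arguments. -/
inductive HeadVarApp : Lam → Prop
  | var (n : ℕ) : HeadVarApp (var n)
  | app {a : Lam} (b : Lam) : HeadVarApp a → HeadVarApp (app a b)

/-- Head normal forms `λx₁…λxₙ.(y t₁ … tₘ)`. -/
inductive IsHNF : Lam → Prop
  | head {t : Lam} : HeadVarApp t → IsHNF t
  | abs {a : Lam} : IsHNF a → IsHNF (Lam.abs a)

/-- A term is solvable if it β-reduces to a head normal form. -/
def Solvable (t : Lam) : Prop := ∃ h, Steps t h ∧ IsHNF h

/-- `Ω = (λx.(x x))(λx.(x x))`. -/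
def Omega : Lam := app (abs (app (var 0) (var 0))) (abs (app (var 0) (var 0)))

/-- Ω-reduction `▷_Ω` : replace an unsolvable subterm by `Ω`. -/
inductive OmegaStep : Lam → Lam → Prop
  | unsolv {t : Lam} : ¬ Solvable t → OmegaStep t Omega
  | appL {a a' : Lam} (b : Lam) : OmegaStep a a' → OmegaStep (app a b) (app a' b)
  | appR (a : Lam) {b b' : Lam} : OmegaStep b b' → OmegaStep (app a b) (app a b')
  | abs {a a' : Lam} : OmegaStep a a' → OmegaStep (Lam.abs a) (Lam.abs a')

/-- `▷_Ω*`. -/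
def OmegaSteps : Lam → Lam → Prop := Relation.ReflTransGen OmegaStep

/-- `▷_{βΩ}` : union of `▷` and `▷_Ω`. -/
def BOStep (t t' : Lam) : Prop := Step t t' ∨ OmegaStep t t'

/-- `▷_{βΩ}*`. -/
def BOSteps : Lam → Lam → Prop := Relation.ReflTransGen BOStep

/-- `u ≃ v` : equality in the λ-theory H (common `▷_{βΩ}*`-reduct). -/
def SimH (u v : Lam) : Prop := ∃ w, BOSteps u w ∧ BOSteps v w

/-- Simultaneous (parallel) substitution along `σ`. -/
def psubst (σ : ℕ → Lam) : Lam → Lam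
  | var n => σ n
  | app a b => app (psubst σ a) (psubst σ b)
  | abs a => abs (psubst (fun n => match n with | 0 => var 0 | m + 1 => lift 0 (σ m)) a)

/-- `(x V)` : the application of a head `h` to a list of arguments. -/
def mkApps (h : Lam) (as : List Lam) : Lam := as.foldl app h

/-- `U ⊑ V` : some initial segment of `V` is obtained from `U` by a substitution
followed by componentwise β-reductions. -/
def Sqsubseteq (U V : List Lam) : Prop :=
  ∃ (σ : ℕ → Lam) (W : List Lam), W <+: V ∧
    List.Forall₂ (fun u w => Steps (psubst σ u) w) U W

/-! ### Occurrences as positions -/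

/-- Directions inside a term. -/
inductive Dir : Type where
  | left | right | down
  deriving DecidableEq

/-- Positions (occurrences) in a term. -/
abbrev Pos := List Dir

/-- The subterm of `t` at position `p` (if any). -/
def subtermAt : Lam → Pos → Option Lam
  | t, [] => some t
  | app a _, Dir.left :: p => subtermAt a p
  | app _ b, Dir.right :: p => subtermAt b p
  | abs a, Dir.down :: p => subtermAt a p
  | _, _ :: _ => none

/-- Replace the subterm of `t` at position `p` by `s` (if the position exists). -/
def replaceAt : Lam → Pos → Lam → Option Lam
  | _, [], s => some s
  | app a b, Dir.left :: p, s => (replaceAt a p s).map (fun a' => app a' b)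
  | app a b, Dir.right :: p, s => (replaceAt b p s).map (fun b' => app a b')
  | abs a, Dir.down :: p, s => (replaceAt a p s).map Lam.abs
  | _, _ :: _, _ => none

/-- `OccOf x t p` : position `p` is an occurrence in `t` of the free variable `x`
(index seen from the root, hence shifted by the number of binders crossed). -/
def OccOf (x : ℕ) (t : Lam) (p : Pos) : Prop :=
  subtermAt t p = some (var (x + p.count Dir.down))

/-- `ArgOf t p V` : `V` is the maximal list of arguments, in `t`, of the occurrence
sitting at position `p`; i.e. `([] V)` is the applicative context of that occurrence. -/
def ArgOf (t : Lam) (p : Pos) (V : List Lam) : Prop :=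
  ∃ (q : Pos) (h : Lam),
    p = q ++ List.replicate V.length Dir.left ∧
    (∀ q' : Pos, q ≠ q' ++ [Dir.left]) ∧
    subtermAt t q = some (mkApps h V) ∧ subtermAt t p = some h

/-- `InArgOfOcc x t p q` : `q` is an occurrence of `x` in `t` and the position `p` lies
inside one of the elements of `Arg(x_[q], t)`. -/
def InArgOfOcc (x : ℕ) (t : Lam) (p q : Pos) : Prop :=
  OccOf x t q ∧ ∃ (r : Pos) (n : ℕ),
    q = r ++ List.replicate n Dir.left ∧
    (∀ r' : Pos, r ≠ r' ++ [Dir.left]) ∧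
    ∃ (j : ℕ) (s : Pos), j < n ∧ p = r ++ List.replicate j Dir.left ++ Dir.right :: s

/-- The occurrence `p` of `x` is pure in `t` : no other occurrence `q` of `x` in `t`
is such that `p` occurs in one of the elements of `Arg(x_[q], t)`. -/
def PureOcc (x : ℕ) (t : Lam) (p : Pos) : Prop :=
  OccOf x t p ∧ ∀ q, q ≠ p → ¬ InArgOfOcc x t p q

/-- Renaming of the free variable `y` into `x`. -/
def rename (y x : ℕ) : Lam → Lam
  | var n => if n = y then var x else var n
  | app a b => app (rename y x a) (rename y x b)
  | abs a => abs (rename (y + 1) (x + 1) a)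

/-- `Residue x u v p p'` : along some β-reduction from `u` to `v`, the occurrence `p'` of
`x` in `v` is a residue (traced copy) of the occurrence `p` of `x` in `u`.  This is
expressed by marking the occurrence `p` of `x` with a fresh variable `y` and tracing the
occurrences of `y`. -/
def Residue (x : ℕ) (u v : Lam) (p p' : Pos) : Prop :=
  ∃ (y : ℕ) (u₀ v₀ : Lam),
    ¬ Free y u ∧
    replaceAt u p (var (y + p.count Dir.down)) = some u₀ ∧
    Steps u₀ v₀ ∧ rename y x v₀ = v ∧ OccOf y v₀ p'

/-- The occurrence `p` of the free variable `0` ("x") in `G` is good with respect to the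
closed term `A` : it is pure in `G` and `u[x:=A]` is solvable for every subterm `u` of
`G` in which this occurrence occurs. -/
def GoodOcc (A G : Lam) (p : Pos) : Prop :=
  PureOcc 0 G p ∧
    ∀ (q : Pos) (u : Lam), q <+: p → subtermAt G q = some u →
      Solvable (subst u (q.count Dir.down) A)

/-! ### Miscellaneous -/

/-- A fixed effective Gödel numbering of λ-terms. -/
def code : Lam → ℕ
  | var n => Nat.pair 0 n
  | app a b => Nat.pair 1 (Nat.pair (code a) (code b))
  | abs a => Nat.pair 2 (code a)

/-- Body `f^k z` of the Church numeral. -/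
def churchBody : ℕ → Lam
  | 0 => var 0
  | k + 1 => app (var 1) (churchBody k)

/-- The Church numeral `c_k = λf λz.(f^k z)`. -/
def church (k : ℕ) : Lam := abs (abs (churchBody k))

/-- `n`-fold abstraction `λx₁…λxₙ.t`. -/
def absN : ℕ → Lam → Lam
  | 0, t => t
  | n + 1, t => abs (absN n t)

/-- Number of symbols of a term. -/
def size : Lam → ℕ
  | var _ => 1
  | app a b => size a + size b + 1
  | abs a => size a + 1

/-- Subterm relation. -/
inductive Subterm : Lam → Lam → Prop
  | refl (t : Lam) : Subterm t t
  | appL {s a : Lam} (b : Lam) : Subterm s a → Subterm s (app a b)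
  | appR (a : Lam) {s b : Lam} : Subterm s b → Subterm s (app a b)
  | abs {s a : Lam} : Subterm s a → Subterm s (Lam.abs a)

/-- `t` contains no subterm of the form `(x u)` for the free variable `x`. -/
def NoVarApp : ℕ → Lam → Prop
  | _, var _ => True
  | x, app a b => a ≠ var x ∧ NoVarApp x a ∧ NoVarApp x b
  | x, abs a => NoVarApp (x + 1) a

/-- Headed by the variable `d` : term of the form `(x V)` with `x = var d`. -/
inductive Headed : ℕ → Lam → Prop
  | var (d : ℕ) : Headed d (var d)
  | app {d : ℕ} {a : Lam} (b : Lam) : Headed d a → Headed d (app a b)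



/-! ### de Bruijn lemmas -/

theorem lift_lift (t : Lam) : ∀ i j, i ≤ j →
    lift i (lift j t) = lift (j + 1) (lift i t) := by
  induction t with
  | var n =>
      intro i j h
      simp only [lift]
      split_ifs <;> simp only [lift] <;> split_ifs <;>
        first | rfl | omega | (exfalso; omega)
  | app a b iha ihb => intro i j h; simp only [lift, iha i j h, ihb i j h]
  | abs a ih => intro i j h; simp only [lift, ih (i+1) (j+1) (by omega)]

theorem lift_subst (t : Lam) : ∀ k d q, k ≤ d →
    lift d (subst t k q) = subst (lift (d + 1) t) k (lift d q) := by
  induction t with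
  | var n =>
      intro k d q h
      simp only [subst, lift]
      split_ifs <;> simp only [subst, lift] <;> split_ifs <;>
        first | rfl | omega | (exfalso; omega) | (congr 1; omega)
  | app a b iha ihb => intro k d q h; simp only [lift, subst, iha k d q h, ihb k d q h]
  | abs a ih =>
      intro k d q h
      simp only [lift, subst, ih (k+1) (d+1) (lift 0 q) (by omega)]
      rw [lift_lift q 0 d (Nat.zero_le d)]

theorem subst_lift (t : Lam) : ∀ k u, subst (lift k t) k u = t := by
  induction t with
  | var n =>
      intro k u
      simp only [lift]
      split_ifs <;> simp only [subst] <;> split_ifs <;>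
        first | rfl | omega | (exfalso; omega) | (congr 1; omega)
  | app a b iha ihb => intro k u; simp only [lift, subst, iha, ihb]
  | abs a ih => intro k u; simp only [lift, subst, ih]

theorem lift_subst' (t : Lam) : ∀ d k u, d ≤ k →
    subst (lift d t) (k + 1) (lift d u) = lift d (subst t k u) := by
  induction t with
  | var n =>
      intro d k u h
      simp only [subst, lift]
      split_ifs <;> simp only [subst, lift] <;> (try split_ifs) <;>
        first | rfl | omega | (exfalso; omega) | (congr 1; omega)
  | app a b iha ihb => intro d k u h; simp only [lift, subst, iha _ _ _ h, ihb _ _ _ h]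
  | abs a ih =>
      intro d k u h
      simp only [lift, subst, lift_lift u 0 d (Nat.zero_le d), ih (d+1) (k+1) _ (by omega)]

theorem subst_subst (t : Lam) : ∀ i k q u, i ≤ k →
    subst (subst t i q) k u = subst (subst t (k + 1) (lift i u)) i (subst q k u) := by
  induction t with
  | var n =>
      intro i k q u h
      simp only [subst, lift]
      split_ifs <;> simp only [subst, lift, subst_lift] <;> (try split_ifs) <;>
        first | rfl | omega | (exfalso; omega) | (congr 1; omega)
  | app a b iha ihb =>
      intro i k q u h
      simp only [subst, iha _ _ _ _ h, ihb _ _ _ _ h]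
  | abs a ih =>
      intro i k q u h
      simp only [subst, ih (i+1) (k+1) _ _ (by omega)]
      rw [lift_lift u 0 i (Nat.zero_le i), lift_subst' q 0 k u (Nat.zero_le k)]

/-! ### Head reduction as a function -/

/-- The head-reduction step, as a partial function. -/
def hstep : Lam → Option Lam
  | var _ => none
  | abs a => (hstep a).map Lam.abs
  | app (abs p) q => some (subst p 0 q)
  | app (var _) _ => none
  | app (app a b) c => (hstep (app a b)).map (fun x => app x c)

theorem headVarApp_hstep {t : Lam} (h : HeadVarApp t) : hstep t = none := by
  induction h with
  | var n => rfl
  | app b h ih =>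
      cases h with
      | var n => simp [hstep, ih]
      | app => simp only [hstep]; rw [ih]; rfl

theorem headVarApp_not_abs {t : Lam} (h : HeadVarApp t) : ∀ a, t ≠ abs a := by
  cases h <;> intro a hh <;> exact absurd hh (by simp)

theorem hstep_none_isHNF : ∀ t : Lam, hstep t = none →
    IsHNF t ∧ ((∀ a, t ≠ abs a) → HeadVarApp t) := by
  intro t
  induction t with
  | var n => intro _; exact ⟨IsHNF.head (HeadVarApp.var n), fun _ => HeadVarApp.var n⟩
  | app a b iha ihb =>
      intro h
      match a, h with
      | var n, _ =>
          exact ⟨IsHNF.head (HeadVarApp.app b (HeadVarApp.var n)),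
            fun _ => HeadVarApp.app b (HeadVarApp.var n)⟩
      | app a1 a2, h =>
          simp only [hstep, Option.map_eq_none_iff] at h
          have := iha h
          have hv := this.2 (by intro x hx; exact absurd hx (by simp))
          exact ⟨IsHNF.head (HeadVarApp.app b hv), fun _ => HeadVarApp.app b hv⟩
  | abs a ih =>
      intro h
      simp only [hstep, Option.map_eq_none_iff] at h
      exact ⟨IsHNF.abs (ih h).1, fun hne => absurd rfl (hne a)⟩

theorem hstep_step {t t' : Lam} (h : hstep t = some t') : Step t t' := by
  induction t generalizing t' with
  | var n => simp [hstep] at h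
  | abs a ih =>
      simp only [hstep, Option.map_eq_some_iff] at h
      obtain ⟨x, hx, rfl⟩ := h
      exact Step.abs (ih hx)
  | app a b iha ihb =>
      match a, h with
      | abs p, h =>
          simp only [hstep, Option.some.injEq] at h
          subst h; exact Step.beta p b
      | var n, h => simp [hstep] at h
      | app a1 a2, h =>
          simp only [hstep, Option.map_eq_some_iff] at h
          obtain ⟨x, hx, rfl⟩ := h
          exact Step.appL b (iha hx)

theorem hstep_subst {t t' : Lam} (h : hstep t = some t') :
    ∀ k u, hstep (subst t k u) = some (subst t' k u) := by
  induction t generalizing t' with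
  | var n => simp [hstep] at h
  | abs a ih =>
      simp only [hstep, Option.map_eq_some_iff] at h
      obtain ⟨x, hx, rfl⟩ := h
      intro k u
      simp only [subst, hstep, ih hx (k+1) (lift 0 u)]
      rfl
  | app a b iha ihb =>
      match a, h with
      | abs p, h =>
          simp only [hstep, Option.some.injEq] at h
          subst h
          intro k u
          simp only [subst, hstep]
          rw [subst_subst p 0 k b u (Nat.zero_le k)]
      | var n, h => simp [hstep] at h
      | app a1 a2, h =>
          simp only [hstep, Option.map_eq_some_iff] at h
          obtain ⟨x, hx, rfl⟩ := h
          intro k u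
          have h2 := iha hx k u
          simp only [subst] at h2 ⊢
          show Option.map _ (hstep (app (subst a1 k u) (subst a2 k u))) = _
          rw [h2]
          rfl

/-- Termination of head reduction. -/
inductive HNorm : Lam → Prop
  | hnf {t : Lam} : hstep t = none → HNorm t
  | step {t t' : Lam} : hstep t = some t' → HNorm t' → HNorm t

theorem hnorm_of_subst {s : Lam} (hs : HNorm s) :
    ∀ t k u, s = subst t k u → HNorm t := by
  induction hs with
  | hnf hn =>
      intro t k u he
      cases h : hstep t with
      | none => exact HNorm.hnf h
      | some t' =>
          subst he
          rw [hstep_subst h k u] at hn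
          exact absurd hn (by simp)
  | step hs _ ih =>
      intro t k u he
      cases h : hstep t with
      | none => exact HNorm.hnf h
      | some t' =>
          subst he
          rw [hstep_subst h k u] at hs
          exact HNorm.step h (ih t' k u (Option.some.inj hs).symm)

theorem hnorm_solvable {t : Lam} (h : HNorm t) : Solvable t := by
  induction h with
  | hnf hn => exact ⟨_, Relation.ReflTransGen.refl, (hstep_none_isHNF _ hn).1⟩
  | step hs _ ih =>
      obtain ⟨w, hw, hhnf⟩ := ih
      exact ⟨w, Relation.ReflTransGen.head (hstep_step hs) hw, hhnf⟩

theorem hnorm_abs {t : Lam} (h : HNorm t) : HNorm (abs t) := by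
  induction h with
  | hnf hn => exact HNorm.hnf (by simp [hstep, hn])
  | step hs _ ih => exact HNorm.step (by simp [hstep, hs]) ih

/-! ### Kashima-style standardization for head reduction -/

/-- Weak-head ("hap") reduction. -/
inductive Hap : Lam → Lam → Prop
  | beta (p q : Lam) : Hap (app (abs p) q) (subst p 0 q)
  | appL {a a' : Lam} (b : Lam) : Hap a a' → Hap (app a b) (app a' b)

/-- Reflexive–transitive closure of `Hap`. -/
def Haps : Lam → Lam → Prop := Relation.ReflTransGen Hap

/-- Standard reduction (Kashima). -/
inductive St : Lam → Lam → Prop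
  | var {M : Lam} {n : ℕ} : Haps M (var n) → St M (var n)
  | abs {M M₀ N₀ : Lam} : Haps M (abs M₀) → St M₀ N₀ → St M (abs N₀)
  | app {M M₁ M₂ N₁ N₂ : Lam} : Haps M (app M₁ M₂) → St M₁ N₁ → St M₂ N₂ →
      St M (app N₁ N₂)

theorem hap_isApp {a a' : Lam} (h : Hap a a') : ∃ x y, a = app x y := by
  cases h <;> exact ⟨_, _, rfl⟩

theorem hap_hstep {a a' : Lam} (h : Hap a a') : hstep a = some a' := by
  induction h with
  | beta p q => rfl
  | appL b h ih =>
      obtain ⟨x, y, rfl⟩ := hap_isApp h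
      simp only [hstep, ih]; rfl

theorem haps_appL {a a' : Lam} (b : Lam) (h : Haps a a') : Haps (app a b) (app a' b) :=
  Relation.ReflTransGen.lift (fun x => app x b) (fun _ _ hh => Hap.appL b hh) _ _ h

theorem haps_hnorm {a a' : Lam} (h : Haps a a') (h' : HNorm a') : HNorm a := by
  induction h using Relation.ReflTransGen.head_induction_on with
  | refl => exact h'
  | head hs _ ih => exact HNorm.step (hap_hstep hs) ih

theorem st_refl (t : Lam) : St t t := by
  induction t with
  | var n => exact St.var Relation.ReflTransGen.refl
  | app a b iha ihb => exact St.app Relation.ReflTransGen.refl iha ihb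
  | abs a ih => exact St.abs Relation.ReflTransGen.refl ih

theorem haps_st {M M' N : Lam} (h : Haps M M') (h' : St M' N) : St M N := by
  cases h' with
  | var h2 => exact St.var (h.trans h2)
  | abs h2 h3 => exact St.abs (h.trans h2) h3
  | app h2 h3 h4 => exact St.app (h.trans h2) h3 h4

theorem hap_lift {a a' : Lam} (h : Hap a a') (d : ℕ) : Hap (lift d a) (lift d a') := by
  induction h with
  | beta p q =>
      have := Hap.beta (lift (d+1) p) (lift d q)
      rw [← lift_subst p 0 d q (Nat.zero_le d)] at this
      exact this
  | appL b h ih => exact Hap.appL (lift d b) ih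

theorem haps_lift {a a' : Lam} (h : Haps a a') (d : ℕ) : Haps (lift d a) (lift d a') :=
  Relation.ReflTransGen.lift (lift d) (fun _ _ hh => hap_lift hh d) _ _ h

theorem st_lift {a a' : Lam} (h : St a a') : ∀ d, St (lift d a) (lift d a') := by
  induction h with
  | @var M n h2 =>
      intro d
      have := haps_lift h2 d
      by_cases hnd : n < d
      · simp only [lift, if_pos hnd] at this ⊢
        exact St.var this
      · simp only [lift, if_neg hnd] at this ⊢
        exact St.var this
  | abs h2 _ ih =>
      intro d
      have := haps_lift h2 d
      simp only [lift] at this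
      exact St.abs this (ih (d+1))
  | app h2 _ _ ih1 ih2 =>
      intro d
      have := haps_lift h2 d
      simp only [lift] at this
      exact St.app this (ih1 d) (ih2 d)

theorem hap_subst {a a' : Lam} (h : Hap a a') (k : ℕ) (u : Lam) :
    Hap (subst a k u) (subst a' k u) := by
  induction h with
  | beta p q =>
      have := Hap.beta (subst p (k+1) (lift 0 u)) (subst q k u)
      rw [← subst_subst p 0 k q u (Nat.zero_le k)] at this
      exact this
  | appL b h ih => exact Hap.appL (subst b k u) ih

theorem haps_subst {a a' : Lam} (h : Haps a a') (k : ℕ) (u : Lam) :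
    Haps (subst a k u) (subst a' k u) :=
  Relation.ReflTransGen.lift (fun x => subst x k u) (fun _ _ hh => hap_subst hh k u) _ _ h

theorem st_subst {A A' : Lam} (h : St A A') :
    ∀ k B B', St B B' → St (subst A k B) (subst A' k B') := by
  induction h with
  | @var M n h2 =>
      intro k B B' hB
      have hh := haps_subst h2 k B
      by_cases h1 : n = k
      · subst h1
        simp only [subst, if_pos rfl] at hh ⊢
        exact haps_st hh hB
      · simp only [subst, if_neg h1] at hh ⊢
        by_cases h2 : k < n
        · rw [if_pos h2] at hh ⊢; exact St.var hh
        · rw [if_neg h2] at hh ⊢; exact St.var hh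
  | @abs M M₀ N₀ h2 h3 ih =>
      intro k B B' hB
      have hh := haps_subst h2 k B
      simp only [subst] at hh ⊢
      exact St.abs hh (ih (k+1) (lift 0 B) (lift 0 B') (st_lift hB 0))
  | @app M M₁ M₂ N₁ N₂ h2 h3 h4 ih1 ih2 =>
      intro k B B' hB
      have hh := haps_subst h2 k B
      simp only [subst] at hh ⊢
      exact St.app hh (ih1 k B B' hB) (ih2 k B B' hB)

theorem st_beta {M P Q : Lam} (h : St M (app (abs P) Q)) : St M (subst P 0 Q) := by
  cases h with
  | app h2 h3 h4 =>
      rename_i M₁ M₂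
      cases h3 with
      | abs h5 h6 =>
          rename_i P₀
          have hh : Haps M (subst P₀ 0 M₂) :=
            (h2.trans (haps_appL M₂ h5)).tail (Hap.beta P₀ M₂)
          exact haps_st hh (st_subst h6 0 M₂ Q h4)

theorem st_step {N N' : Lam} (hs : Step N N') : ∀ M, St M N → St M N' := by
  induction hs with
  | beta a b => intro M h; exact st_beta h
  | appL b hs ih =>
      intro M h
      cases h with
      | app h2 h3 h4 => exact St.app h2 (ih _ h3) h4
  | appR a hs ih =>
      intro M h
      cases h with
      | app h2 h3 h4 => exact St.app h2 h3 (ih _ h4)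
  | abs hs ih =>
      intro M h
      cases h with
      | abs h2 h3 => exact St.abs h2 (ih _ h3)

theorem steps_st {M N : Lam} (h : Steps M N) : St M N := by
  induction h with
  | refl => exact st_refl M
  | tail _ hs ih => exact st_step hs _ ih

theorem st_headVarApp {M N : Lam} (h : St M N) (hv : HeadVarApp N) :
    ∃ M', Haps M M' ∧ HeadVarApp M' := by
  induction h with
  | var h2 => exact ⟨_, h2, HeadVarApp.var _⟩
  | abs h2 h3 ih => cases hv
  | @app M M₁ M₂ N₁ N₂ h2 h3 h4 ih1 ih2 =>
      cases hv with
      | app b hv1 =>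
          obtain ⟨M₁', hM1, hv1'⟩ := ih1 hv1
          exact ⟨app M₁' M₂, h2.trans (haps_appL M₂ hM1), HeadVarApp.app M₂ hv1'⟩

theorem st_hnf_hnorm {N : Lam} (hh : IsHNF N) : ∀ M, St M N → HNorm M := by
  induction hh with
  | head hv =>
      intro M h
      obtain ⟨M', hM, hv'⟩ := st_headVarApp h hv
      exact haps_hnorm hM (HNorm.hnf (headVarApp_hstep hv'))
  | abs hh ih =>
      intro M h
      cases h with
      | abs h2 h3 => exact haps_hnorm h2 (hnorm_abs (ih _ h3))

theorem solvable_hnorm {t : Lam} (h : Solvable t) : HNorm t := by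
  obtain ⟨w, hw, hhnf⟩ := h
  exact st_hnf_hnorm hhnf t (steps_st hw)

theorem solvable_subst {t : Lam} (k : ℕ) (u : Lam) (h : Solvable (subst t k u)) :
    Solvable t :=
  hnorm_solvable (hnorm_of_subst (solvable_hnorm h) t k u rfl)

/-! ### Simulation of βΩ-reduction under substitution -/

theorem step_subst {a a' : Lam} (h : Step a a') (k : ℕ) (u : Lam) :
    Step (subst a k u) (subst a' k u) := by
  induction h generalizing k u with
  | beta p q =>
      have := Step.beta (subst p (k+1) (lift 0 u)) (subst q k u)
      rw [← subst_subst p 0 k q u (Nat.zero_le k)] at this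
      exact this
  | appL b _ ih => exact Step.appL _ (ih k u)
  | appR a _ ih => exact Step.appR _ (ih k u)
  | abs _ ih => exact Step.abs (ih (k+1) (lift 0 u))

theorem omega_subst (k : ℕ) (u : Lam) : subst Omega k u = Omega := by
  simp [Omega, subst]

theorem omegaStep_subst {a a' : Lam} (h : OmegaStep a a') (k : ℕ) (u : Lam) :
    OmegaStep (subst a k u) (subst a' k u) := by
  induction h generalizing k u with
  | unsolv hu =>
      rw [omega_subst]
      exact OmegaStep.unsolv (fun hs => hu (solvable_subst k u hs))
  | appL b _ ih => exact OmegaStep.appL _ (ih k u)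
  | appR a _ ih => exact OmegaStep.appR _ (ih k u)
  | abs _ ih => exact OmegaStep.abs (ih (k+1) (lift 0 u))

theorem boStep_subst {a a' : Lam} (h : BOStep a a') (k : ℕ) (u : Lam) :
    BOStep (subst a k u) (subst a' k u) := by
  cases h with
  | inl h => exact Or.inl (step_subst h k u)
  | inr h => exact Or.inr (omegaStep_subst h k u)

theorem boSteps_subst {a a' : Lam} (h : BOSteps a a') (k : ℕ) (u : Lam) :
    BOSteps (subst a k u) (subst a' k u) :=
  Relation.ReflTransGen.lift (fun x => subst x k u) (fun _ _ hh => boStep_subst hh k u) _ _ h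

theorem subst_of_not_free {t : Lam} : ∀ k, ¬ Free k t → ∀ u v, subst t k u = subst t k v := by
  induction t with
  | var n =>
      intro k hf u v
      simp only [Free] at hf
      have hnk : ¬ n = k := fun hh => hf hh.symm
      simp only [subst, if_neg hnk]
  | app a b iha ihb =>
      intro k hf u v
      simp only [Free] at hf
      push_neg at hf
      simp only [subst, iha k hf.1 u v, ihb k hf.2 u v]
  | abs a ih =>
      intro k hf u v
      simp only [Free] at hf
      simp only [subst, ih (k+1) hf (lift 0 u) (lift 0 v)]



end Lam


open Lam in
/-- if `λx.F` is closed and `x ∉ βΩ(F)` (some `▷_{βΩ}*`-reduct of `F`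
does not contain `x`), then `F[x:=u] ≃ F[x:=v]` for all closed `u, v`; hence the range
of `λx.F` in H (the set of `≃`-classes of the `F[x:=u]`, `u` closed) is a singleton. -/
theorem range_singleton (F : Lam) (hcl : Closed (Lam.abs F))
    (h : ∃ t', BOSteps F t' ∧ ¬ Free 0 t') :
    (∀ u v, Closed u → Closed v → SimH (subst F 0 u) (subst F 0 v)) ∧
    (Set.range fun u : {u : Lam // Closed u} =>
        Quot.mk SimH (subst F 0 u.1)).Subsingleton := by
  obtain ⟨t', ht, hfree⟩ := h
  have main : ∀ u v : Lam, SimH (subst F 0 u) (subst F 0 v) := by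
    intro u v
    refine ⟨subst t' 0 u, boSteps_subst ht 0 u, ?_⟩
    rw [subst_of_not_free 0 hfree u v]
    exact boSteps_subst ht 0 v
  refine ⟨fun u v _ _ => main u v, ?_⟩
  rintro a ⟨u, rfl⟩ b ⟨v, rfl⟩
  exact Quot.sound (main u.1 v.1)
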